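/- Let R be a local ring with residue field k, let L be a finitely generated free R-module of rank m, and let f : L → L be an endomorphism. Set r = dim_k((L/f(L)) ⊗_R k) and s = m − r. If the (s+1)-st exterior power of f is zero, then L/f(L) is a free R-module of rank r. -/

import Mathlib

open scoped TensorProduct

lemma aux_li_of_span {R : Type*} [CommRing R] [Nontrivial R] {L : Type*} [AddCommGroup L]
    [Module R L] [Module.Free R L] [Module.Finite R L] {ι : Type*} [Fintype ι] (u : ι → L)
    (hcard : Fintype.card ι = Module.finrank R L)
    (hspan : Submodule.span R (Set.range u) = ⊤) : LinearIndependent R u := by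
  classical
  let ψ : (ι →₀ R) →ₗ[R] L := Finsupp.linearCombination R u
  have hψ : Function.Surjective ψ := by
    rw [← LinearMap.range_eq_top, Finsupp.range_linearCombination, hspan]
  let B0 := Module.finBasis R L
  let eqv : ι ≃ Fin (Module.finrank R L) := Fintype.equivFinOfCardEq hcard
  let d : (ι →₀ R) ≃ₗ[R] L := (Finsupp.domLCongr eqv).trans B0.repr.symm
  have hE : Function.Surjective (ψ ∘ₗ d.symm.toLinearMap) :=
    hψ.comp d.symm.surjective
  have hEinj : Function.Injective (ψ ∘ₗ d.symm.toLinearMap) :=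
    OrzechProperty.injective_of_surjective_endomorphism _ hE
  have hψinj : Function.Injective ψ := by
    have : ψ = (ψ ∘ₗ d.symm.toLinearMap) ∘ₗ d.toLinearMap := by
      ext w; simp
    rw [this]
    exact hEinj.comp d.injective
  exact hψinj

open scoped TensorProduct

lemma aux_alt_vanish {R : Type*} [CommRing R] {L : Type*} [AddCommGroup L] [Module R L]
    (n : ℕ) (f : L →ₗ[R] L)
    (hwedge : ∀ x ∈ ⋀[R]^n L, ExteriorAlgebra.map f x = 0)
    (g : L [⋀^Fin n]→ₗ[R] R) (v : Fin n → L) : g (f ∘ v) = 0 := by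
  have h1 : ExteriorAlgebra.map f (ExteriorAlgebra.ιMulti R n v) = 0 :=
    hwedge _ (ExteriorAlgebra.ιMulti_range R n ⟨v, rfl⟩)
  rw [ExteriorAlgebra.map_apply_ιMulti] at h1
  have h2 : (f ∘ v) = fun i => f (v i) := rfl
  let fam : ∀ i, L [⋀^Fin i]→ₗ[R] R := Function.update (fun _ => 0) n g
  have := congrArg (ExteriorAlgebra.liftAlternating fam) h1
  rwa [ExteriorAlgebra.liftAlternating_apply_ιMulti, map_zero,
    show fam n = g by simp [fam]] at this

lemma aux_coord_zero {R : Type*} [CommRing R] {L : Type*} [AddCommGroup L] [Module R L]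
    {s r : ℕ} (B : Module.Basis (Fin s ⊕ Fin r) R L) (f : L →ₗ[R] L) (y : Fin s → L)
    (hy : ∀ i, B (Sum.inl i) = f (y i))
    (halt : ∀ (g : L [⋀^Fin (s+1)]→ₗ[R] R) (v : Fin (s+1) → L), g (⇑f ∘ v) = 0)
    (z : L) (j : Fin r) : B.repr (f z) (Sum.inr j) = 0 := by
  classical
  set σ : Fin (s+1) → (Fin s ⊕ Fin r) := Fin.cases (Sum.inr j) Sum.inl with hσ
  let φ : L →ₗ[R] (Fin (s+1) → R) :=
    LinearMap.pi (fun q => Finsupp.lapply (σ q) ∘ₗ (B.repr : L →ₗ[R] _))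
  let G : L [⋀^Fin (s+1)]→ₗ[R] R := (Matrix.detRowAlternating).compLinearMap φ
  set v : Fin (s+1) → L := Fin.cases z y with hv
  have h0 := halt G v
  set M : Matrix (Fin (s+1)) (Fin (s+1)) R :=
    Matrix.of (fun p q => B.repr (f (v p)) (σ q)) with hM
  have hdet : M.det = 0 := by
    have : G (⇑f ∘ v) = M.det := rfl
    rw [← this, h0]
  have htri : M.BlockTriangular id := by
    intro p q hpq
    simp only [id] at hpq
    induction p using Fin.cases with
    | zero => exact absurd hpq (Nat.not_lt_zero _)
    | succ i =>
      have : M i.succ q = (B.repr (B (Sum.inl i))) (σ q) := by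
        simp [hM, hv, hy i]
      rw [this, B.repr_self, Finsupp.single_apply]
      induction q using Fin.cases with
      | zero => simp [hσ]
      | succ q' =>
        have hne : (Sum.inl i : Fin s ⊕ Fin r) ≠ Sum.inl q' := by
          simp only [ne_eq, Sum.inl.injEq]
          intro h
          subst h
          exact absurd hpq (lt_irrefl _)
        simp [hσ]
        exact fun h => (hne (congrArg Sum.inl h)).elim
  have hprod := Matrix.det_of_upperTriangular htri
  rw [hdet] at hprod
  have hdiag : ∀ i : Fin s, M i.succ i.succ = 1 := by
    intro i
    have : M i.succ i.succ = (B.repr (B (Sum.inl i))) (σ i.succ) := by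
      simp [hM, hv, hy i]
    rw [this, B.repr_self, hσ]
    simp
  rw [Fin.prod_univ_succ] at hprod
  simp only [hdiag, Finset.prod_const_one, mul_one] at hprod
  have : M 0 0 = B.repr (f z) (Sum.inr j) := by simp [hM, hv, hσ]
  rw [this] at hprod
  exact hprod.symm


/-- Let `R` be a local ring with residue field `k`, `L` a finitely generated free `R`-module
of rank `m`, and `f : L → L` an endomorphism.  Set `r = dim_k ((L/f(L)) ⊗_R k)` and
`s = m - r`.  If the `(s+1)`-st exterior power of `f` is zero, then `L/f(L)` is a free
`R`-module of rank `r`. -/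
theorem stmt0 (R : Type*) [CommRing R] [IsLocalRing R]
    (L : Type*) [AddCommGroup L] [Module R L] [Module.Free R L] [Module.Finite R L]
    (m r s : ℕ) (f : L →ₗ[R] L)
    (hm : Module.finrank R L = m)
    (hr : Module.finrank (IsLocalRing.ResidueField R)
      (IsLocalRing.ResidueField R ⊗[R] (L ⧸ LinearMap.range f)) = r)
    (hs : s = m - r)
    (hwedge : ∀ x ∈ ⋀[R]^(s + 1) L, ExteriorAlgebra.map f x = 0) :
    Module.Free R (L ⧸ LinearMap.range f) ∧ Module.finrank R (L ⧸ LinearMap.range f) = r := by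
  classical
  set k := IsLocalRing.ResidueField R with hk
  set N := LinearMap.range f with hN
  let π : k ⊗[R] L →ₗ[k] k ⊗[R] (L ⧸ N) := N.mkQ.baseChange k
  let g : k ⊗[R] L →ₗ[k] k ⊗[R] L := f.baseChange k
  have hexact : Function.Exact g π :=
    lTensor_exact k (LinearMap.exact_map_mkQ_range f) (Submodule.mkQ_surjective N)
  have hsurjπ : Function.Surjective π :=
    LinearMap.lTensor_surjective k (Submodule.mkQ_surjective N)
  have hV : Module.finrank k (k ⊗[R] L) = m := by
    rw [Module.finrank_baseChange, hm]
  -- dimension count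
  have hrange : LinearMap.range π = ⊤ := LinearMap.range_eq_top.2 hsurjπ
  have hcount : r + Module.finrank k (LinearMap.ker π) = m := by
    have := LinearMap.finrank_range_add_finrank_ker π
    rwa [hrange, finrank_top, hr, hV] at this
  have hrm : r ≤ m := le_of_add_le_left hcount.le
  have hker : Module.finrank k (LinearMap.ker π) = s := by omega
  have hsr : s + r = m := by omega
  -- pure tensors span
  have htop : Submodule.span k (Set.range fun z : L => (1:k) ⊗ₜ[R] z) = ⊤ := by
    rw [eq_top_iff]
    rintro w -
    induction w using TensorProduct.induction_on with
    | zero => exact Submodule.zero_mem _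
    | tmul a z =>
        have : a ⊗ₜ[R] z = a • ((1:k) ⊗ₜ[R] z) := by
          rw [TensorProduct.smul_tmul', smul_eq_mul, mul_one]
        rw [this]
        exact Submodule.smul_mem _ _ (Submodule.subset_span ⟨z, rfl⟩)
    | add w₁ w₂ h₁ h₂ => exact Submodule.add_mem _ h₁ h₂
  have hkerspan : Submodule.span k (Set.range fun z : L => (1:k) ⊗ₜ[R] f z)
      = LinearMap.ker π := by
    rw [hexact.linearMap_ker_eq]
    have : LinearMap.range g = Submodule.map g ⊤ := (Submodule.map_top g).symm
    rw [this, ← htop, Submodule.map_span, ← Set.range_comp]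
    congr 1
  -- choose y : Fin s → L
  obtain ⟨bset, hbsub, hbspan, hbind⟩ :=
    exists_linearIndependent k (Set.range fun z : L => (1:k) ⊗ₜ[R] f z)
  rw [hkerspan] at hbspan
  have hbspan' : Submodule.span k (Set.range ((↑) : bset → k ⊗[R] L)) = LinearMap.ker π := by
    rw [Subtype.range_coe]; exact hbspan
  let BW : Module.Basis bset k (LinearMap.ker π) :=
    (Module.Basis.span hbind).map (LinearEquiv.ofEq _ _ hbspan')
  haveI : Fintype bset := @Fintype.ofFinite _ (Module.Finite.finite_basis BW)
  have hcards : Fintype.card bset = s := by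
    rw [← hker, Module.finrank_eq_card_basis BW]
  let eqs : Fin s ≃ bset := (Fintype.equivFinOfCardEq hcards).symm
  have hYex : ∀ w : bset, ∃ z : L, (1:k) ⊗ₜ[R] f z = (w : k ⊗[R] L) := fun w => hbsub w.2
  choose Y hY using hYex
  let y : Fin s → L := Y ∘ eqs
  have hyspan : Submodule.span k (Set.range fun i : Fin s => (1:k) ⊗ₜ[R] f (y i))
      = LinearMap.ker π := by
    rw [← hbspan']
    congr 1
    have : (fun i : Fin s => (1:k) ⊗ₜ[R] f (y i)) = ((↑) : bset → k ⊗[R] L) ∘ eqs := by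
      funext i; exact hY (eqs i)
    rw [this, Set.range_comp, eqs.surjective.range_eq, Set.image_univ]
  -- choose x : Fin r → L
  have htopC : Submodule.span k
      (Set.range fun z : L => (1:k) ⊗ₜ[R] (Submodule.Quotient.mk z : L ⧸ N)) = ⊤ := by
    rw [eq_top_iff]
    rintro w -
    induction w using TensorProduct.induction_on with
    | zero => exact Submodule.zero_mem _
    | tmul a c =>
        obtain ⟨z, rfl⟩ := Submodule.mkQ_surjective N c
        have : a ⊗ₜ[R] (N.mkQ z) = a • ((1:k) ⊗ₜ[R] (Submodule.Quotient.mk z : L ⧸ N)) := by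
          rw [TensorProduct.smul_tmul', smul_eq_mul, mul_one]; rfl
        rw [this]
        exact Submodule.smul_mem _ _ (Submodule.subset_span ⟨z, rfl⟩)
    | add w₁ w₂ h₁ h₂ => exact Submodule.add_mem _ h₁ h₂
  obtain ⟨cset, hcsub, hcspan, hcind⟩ :=
    exists_linearIndependent k
      (Set.range fun z : L => (1:k) ⊗ₜ[R] (Submodule.Quotient.mk z : L ⧸ N))
  rw [htopC] at hcspan
  let BC : Module.Basis cset k (k ⊗[R] (L ⧸ N)) :=
    Module.Basis.mk hcind (by rw [Subtype.range_coe, hcspan])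
  haveI : Fintype cset := FiniteDimensional.fintypeBasisIndex BC
  have hcardr : Fintype.card cset = r := by
    rw [← hr, Module.finrank_eq_card_basis BC]
  let eqr : Fin r ≃ cset := (Fintype.equivFinOfCardEq hcardr).symm
  have hXex : ∀ w : cset, ∃ z : L,
      (1:k) ⊗ₜ[R] (Submodule.Quotient.mk z : L ⧸ N) = (w : k ⊗[R] (L ⧸ N)) :=
    fun w => hcsub w.2
  choose X hX using hXex
  let x : Fin r → L := X ∘ eqr
  have hxspan : Submodule.span k
      (Set.range fun j : Fin r => π ((1:k) ⊗ₜ[R] x j)) = ⊤ := by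
    have h1 : (fun j : Fin r => π ((1:k) ⊗ₜ[R] x j)) = ((↑) : cset → _) ∘ eqr := by
      funext j
      have : π ((1:k) ⊗ₜ[R] x j) = (1:k) ⊗ₜ[R] (Submodule.Quotient.mk (x j) : L ⧸ N) := rfl
      rw [this]; exact hX (eqr j)
    rw [h1, Set.range_comp, eqr.surjective.range_eq, Set.image_univ, Subtype.range_coe, hcspan]
  -- the combined family
  set u : Fin s ⊕ Fin r → L := Sum.elim (fun i => f (y i)) x with hu
  have huV : (fun idx : Fin s ⊕ Fin r => (1:k) ⊗ₜ[R] u idx)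
      = Sum.elim (fun i : Fin s => (1:k) ⊗ₜ[R] f (y i)) (fun j : Fin r => (1:k) ⊗ₜ[R] x j) := by
    funext idx; cases idx <;> rfl
  have hspanV : Submodule.span k (Set.range fun idx : Fin s ⊕ Fin r => (1:k) ⊗ₜ[R] u idx) = ⊤ := by
    rw [eq_top_iff]
    rintro w -
    have h1 : π w ∈ Submodule.map π
        (Submodule.span k (Set.range fun j : Fin r => (1:k) ⊗ₜ[R] x j)) := by
      rw [Submodule.map_span, ← Set.range_comp]
      have : (⇑π ∘ fun j : Fin r => (1:k) ⊗ₜ[R] x j)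
          = fun j : Fin r => π ((1:k) ⊗ₜ[R] x j) := rfl
      rw [this, hxspan]
      exact Submodule.mem_top
    obtain ⟨t, ht, hπt⟩ := h1
    have h2 : w - t ∈ LinearMap.ker π := by
      rw [LinearMap.mem_ker, map_sub, hπt, sub_self]
    rw [← hyspan] at h2
    rw [huV, Set.Sum.elim_range, Submodule.span_union]
    have := Submodule.add_mem_sup h2 ht
    rwa [sub_add_cancel] at this
  -- Nakayama : u spans L over R
  have hspanL : Submodule.span R (Set.range u) = ⊤ := by
    rw [← IsLocalRing.map_tensorProduct_mk_eq_top (R := R) (M := L), Submodule.map_span,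
      ← Submodule.restrictScalars_span R k Ideal.Quotient.mk_surjective,
      Submodule.restrictScalars_eq_top_iff, ← Set.range_comp]
    have : (⇑(TensorProduct.mk R k L 1) ∘ u) = fun idx => (1:k) ⊗ₜ[R] u idx := rfl
    rw [this, hspanV]
  -- u is a basis
  have hcardu : Fintype.card (Fin s ⊕ Fin r) = Module.finrank R L := by
    simp [hm, hsr]
  have hind : LinearIndependent R u := aux_li_of_span u hcardu hspanL
  let B : Module.Basis (Fin s ⊕ Fin r) R L := Module.Basis.mk hind hspanL.ge
  have hB : ∀ idx, B idx = u idx := fun idx => Module.Basis.mk_apply hind hspanL.ge idx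
  -- range f = span of f ∘ y
  have halt : ∀ (g' : L [⋀^Fin (s+1)]→ₗ[R] R) (v : Fin (s+1) → L), g' (⇑f ∘ v) = 0 :=
    aux_alt_vanish (s+1) f hwedge
  have hyB : ∀ i, B (Sum.inl i) = f (y i) := fun i => hB (Sum.inl i)
  have hcoord : ∀ (z : L) (j : Fin r), B.repr (f z) (Sum.inr j) = 0 :=
    fun z j => aux_coord_zero B f y hyB halt z j
  set P : Submodule R L := Submodule.span R (Set.range fun i => f (y i)) with hP
  set Q : Submodule R L := Submodule.span R (Set.range x) with hQ
  have hBinl : B '' Set.range Sum.inl = Set.range fun i => f (y i) := by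
    rw [← Set.range_comp]
    exact congrArg Set.range (funext fun i => hyB i)
  have hBinr : B '' Set.range Sum.inr = Set.range x := by
    rw [← Set.range_comp]
    exact congrArg Set.range (funext fun j => hB (Sum.inr j))
  have hNP : N = P := by
    apply le_antisymm
    · rintro _ ⟨z, rfl⟩
      rw [hP, ← hBinl]
      rw [Module.Basis.mem_span_image]
      intro idx hidx
      cases idx with
      | inl i => exact ⟨i, rfl⟩
      | inr j =>
          rw [Finset.mem_coe, Finsupp.mem_support_iff] at hidx
          exact absurd (hcoord z j) hidx
    · rw [hP, Submodule.span_le]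
      rintro _ ⟨i, rfl⟩
      exact ⟨y i, rfl⟩
  have hcompl : IsCompl P Q := by
    constructor
    · rw [hP, hQ, ← hBinl, ← hBinr]
      exact B.linearIndependent.disjoint_span_image Set.isCompl_range_inl_range_inr.disjoint
    · rw [codisjoint_iff, hP, hQ, ← hBinl, ← hBinr, ← Submodule.span_union, ← Set.image_union,
        Set.range_inl_union_range_inr, Set.image_univ, B.span_eq]
  have hxind : LinearIndependent R x := by
    have h1 : LinearIndependent R (B ∘ Sum.inr) :=
      B.linearIndependent.comp Sum.inr Sum.inr_injective
    have h2 : (B ∘ Sum.inr) = x := by funext j; exact hB (Sum.inr j)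
    rwa [h2] at h1
  let BQ : Module.Basis (Fin r) R Q := Module.Basis.span hxind
  let e1 : (L ⧸ N) ≃ₗ[R] (L ⧸ P) := Submodule.quotEquivOfEq N P hNP
  let e2 : (L ⧸ P) ≃ₗ[R] Q := Submodule.quotientEquivOfIsCompl P Q hcompl
  let Bfinal : Module.Basis (Fin r) R (L ⧸ N) := BQ.map (e2.symm.trans e1.symm)
  exact ⟨Module.Free.of_basis Bfinal, by
    rw [Module.finrank_eq_card_basis Bfinal, Fintype.card_fin]⟩
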